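/- Zolotarev's first problem for n = 7 at parameter t = −21: for every choice of real numbers c0, c1, c2, c3, c4, c5, the polynomial P(x) = x^7 − 7s·x^6 + c5·x^5 + c4·x^4 + c3·x^3 + c2·x^2 + c1·x + c0 satisfies sup over x ∈ [−1,1] of |P(x)| ≥ 1/b7; moreover the monic polynomial Z(x)/b7 has exactly this form (i.e. b6/b7 = −7s) and attains equality: sup over x ∈ [−1,1] of |Z(x)/b7| = 1/b7. -/

import Mathlib

noncomputable section

def b0 : ℝ := (5236829509 - 598896224 * Real.sqrt 6) / 6591796875

def b1 : ℝ :=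
  -(16 / 6591796875) * Real.sqrt (2 * (1174132032293998751 + 484070220858892414 * Real.sqrt 6))

def b2 : ℝ := -(8 / 2197265625) * (1876889773 + 537098572 * Real.sqrt 6)

def b3 : ℝ :=
  (16 / 6591796875) * Real.sqrt (2 * (56229826406521238759 + 22960487256932311726 * Real.sqrt 6))

def b4 : ℝ := (8 / 6591796875) * (13748181869 + 5603740016 * Real.sqrt 6)

def b5 : ℝ :=
  -(32 / 2197265625) * Real.sqrt (2 * (4907729982259476719 + 2003572376153817166 * Real.sqrt 6))

def b6 : ℝ := -(256 / 6591796875) * (299877839 + 122424446 * Real.sqrt 6)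

def b7 : ℝ :=
  (1024 / 6591796875) * Real.sqrt (2 * (11553696783009431 + 4716776960201434 * Real.sqrt 6))

/-- The septic normalized proper Zolotarev polynomial at parameter t = −21. -/
def Z (x : ℝ) : ℝ :=
  b0 + b1 * x + b2 * x ^ 2 + b3 * x ^ 3 + b4 * x ^ 4 + b5 * x ^ 5 + b6 * x ^ 6 + b7 * x ^ 7

def s : ℝ := (1 / 28) * Real.sqrt ((-24764015 + 10110318 * Real.sqrt 6) / 142)

private noncomputable def tv : ℝ := Real.sqrt 6
private noncomputable def rv : ℝ := Real.sqrt (2 * (11553696783009431 + 4716776960201434 * tv))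

private lemma ht2 : tv ^ 2 = 6 := Real.sq_sqrt (by norm_num)
private lemma htnn : 0 ≤ tv := Real.sqrt_nonneg 6
private lemma tlb : ((244948974278317:ℝ)/100000000000000) ≤ tv := by
  nlinarith [ht2, htnn, sq_nonneg (tv - ((244948974278317:ℝ)/100000000000000))]
private lemma tub : tv ≤ ((122474487139159:ℝ)/50000000000000) := by
  nlinarith [ht2, htnn, sq_nonneg (tv + ((122474487139159:ℝ)/50000000000000))]
private lemma hrho_nn : (0:ℝ) ≤ 2 * (11553696783009431 + 4716776960201434 * tv) := by nlinarith [htnn]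
private lemma hr2 : rv ^ 2 = 2 * (11553696783009431 + 4716776960201434 * tv) := Real.sq_sqrt hrho_nn
private lemma hrnn : 0 ≤ rv := Real.sqrt_nonneg _
private lemma rlb : ((26872030979:ℝ)/125) ≤ rv := by
  nlinarith [hr2, hrnn, tlb, sq_nonneg (rv - ((26872030979:ℝ)/125))]
private lemma rub : rv ≤ ((214976247833:ℝ)/1000) := by
  nlinarith [hr2, hrnn, tub, sq_nonneg (rv + ((214976247833:ℝ)/1000))]

private lemma hs1 : Real.sqrt (2 * (1174132032293998751 + 484070220858892414 * tv))
    = (((547162153751:ℝ)/5041) + ((-223377993078:ℝ)/5041) * tv) * rv := by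
  have hpos : (0:ℝ) ≤ ((547162153751:ℝ)/5041) + ((-223377993078:ℝ)/5041) * tv := by nlinarith [tub]
  have hx : 2 * ((1174132032293998751:ℝ) + 484070220858892414 * tv)
      = (((547162153751:ℝ)/5041) + ((-223377993078:ℝ)/5041) * tv) ^ 2 * (2 * (11553696783009431 + 4716776960201434 * tv)) := by
    linear_combination (((1153006648828421243776018048629950223000:ℝ)/25411681) + ((-470712905627218961071897687560555192912:ℝ)/25411681)*tv) * ht2
  rw [hx, Real.sqrt_mul (sq_nonneg _), Real.sqrt_sq hpos, rv]

private lemma hs3 : Real.sqrt (2 * (56229826406521238759 + 22960487256932311726 * tv))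
    = (((548543689501:ℝ)/5041) + ((-223941879906:ℝ)/5041) * tv) * rv := by
  have hpos : (0:ℝ) ≤ ((548543689501:ℝ)/5041) + ((-223941879906:ℝ)/5041) * tv := by nlinarith [tub]
  have hx : 2 * ((56229826406521238759:ℝ) + 22960487256932311726 * tv)
      = (((548543689501:ℝ)/5041) + ((-223941879906:ℝ)/5041) * tv) ^ 2 * (2 * (11553696783009431 + 4716776960201434 * tv)) := by
    linear_combination (((1158836477828075959866694664298951188184:ℝ)/25411681) + ((-473092404365971351451687818245253821648:ℝ)/25411681)*tv) * ht2
  rw [hx, Real.sqrt_mul (sq_nonneg _), Real.sqrt_sq hpos, rv]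

private lemma hs5 : Real.sqrt (2 * (4907729982259476719 + 2003572376153817166 * tv))
    = (((3243799:ℝ)/71) + ((-1323678:ℝ)/71) * tv) * rv := by
  have hpos : (0:ℝ) ≤ ((3243799:ℝ)/71) + ((-1323678:ℝ)/71) * tv := by nlinarith [tub]
  have hx : 2 * ((4907729982259476719:ℝ) + 2003572376153817166 * tv)
      = (((3243799:ℝ)/71) + ((-1323678:ℝ)/71) * tv) ^ 2 * (2 * (11553696783009431 + 4716776960201434 * tv)) := by
    linear_combination (((40523550906222545808501317784:ℝ)/5041) + ((-16528751018929187590401557712:ℝ)/5041)*tv) * ht2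
  rw [hx, Real.sqrt_mul (sq_nonneg _), Real.sqrt_sq hpos, rv]

private lemma Zeq (x : ℝ) : Z x =
    (5236829509 - 598896224 * tv) / 6591796875
    + (-(16 / 6591796875) * ((((547162153751:ℝ)/5041) + (((-223377993078):ℝ)/5041) * tv) * rv)) * x
    + (-(8 / 2197265625) * (1876889773 + 537098572 * tv)) * x ^ 2
    + ((16 / 6591796875) * ((((548543689501:ℝ)/5041) + (((-223941879906):ℝ)/5041) * tv) * rv)) * x ^ 3
    + ((8 / 6591796875) * (13748181869 + 5603740016 * tv)) * x ^ 4
    + (-(32 / 2197265625) * ((((3243799:ℝ)/71) + (((-1323678):ℝ)/71) * tv) * rv)) * x ^ 5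
    + (-(256 / 6591796875) * (299877839 + 122424446 * tv)) * x ^ 6
    + ((1024 / 6591796875) * rv) * x ^ 7 := by
  simp only [Z, b0, b1, b2, b3, b4, b5, b6, b7, show Real.sqrt 6 = tv from rfl, hs1, hs3, hs5,
    show Real.sqrt (2 * (11553696783009431 + 4716776960201434 * tv)) = rv from rfl]

private noncomputable def G1f (x : ℝ) : ℝ :=
  x ^ 3 + ((((236473533753:ℝ)/5082336200) + (((-24134978973):ℝ)/1270584050) * tv) * rv) * x ^ 2
    + ((((-147159):ℝ)/284) + ((15000:ℝ)/71) * tv) * x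
    + ((((-49128007998551):ℝ)/721691740400) + ((5014106319791:ℝ)/180422935100) * tv) * rv

private noncomputable def G2f (x : ℝ) : ℝ :=
  x ^ 2 + ((((194992518881:ℝ)/5082336200) + (((-19901340621):ℝ)/1270584050) * tv) * rv) * x
    + ((((-96625):ℝ)/284) + ((9856:ℝ)/71) * tv)

private lemma keyA (x : ℝ) : 1 - Z x =
    ((136317967616 + 55651572224 * tv) / 6591796875 - (1024 / 6591796875) * rv * x) * (G1f x) ^ 2 := by
  rw [Zeq, G1f]
  linear_combination (((-1285202161712652593694528494639767661:ℝ)/13411190166819273746795654296875) + ((524681632691193561817260378332915054:ℝ)/13411190166819273746795654296875)*tv + ((214200321682433181840857485574281856:ℝ)/13411190166819273746795654296875)*tv^2 + ((-87446923022253196465523472765754784:ℝ)/13411190166819273746795654296875)*tv^3 + ((9654244679622764131272398404:ℝ)/13411190166819273746795654296875)*x*rv + ((-7882657772296875720659930912:ℝ)/13411190166819273746795654296875)*x*tv*rv + ((1609040779914754941330155584:ℝ)/13411190166819273746795654296875)*x*tv^2*rv + ((8248284012126528891853838746855844:ℝ)/62963334116522411956787109375)*x^2 + ((-3367348431862136447255156979373016:ℝ)/62963334116522411956787109375)*x^2*tv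 + ((-1374713524413837469297138802372224:ℝ)/62963334116522411956787109375)*x^2*tv^2 + ((561224543661345804888148147486336:ℝ)/62963334116522411956787109375)*x^2*tv^3 + ((-61959859507536020659156816:ℝ)/62963334116522411956787109375)*x^3*rv + ((16863337813935159821324416:ℝ)/20987778038840803985595703125)*x^3*tv*rv + ((-10326643250904934293729536:ℝ)/62963334116522411956787109375)*x^3*tv^2*rv + ((-119107273710078289696942317924596:ℝ)/2660422568303763885498046875)*x^4 + ((48625353378031072635744926585144:ℝ)/2660422568303763885498046875)*x^4*tv + ((2205689117741050854214708577024:ℝ)/295602507589307098388671875)*x^4*tv^2 + ((-900469043169570945191853393536:ℝ)/295602507589307098388671875)*x^4*tv^3 + ((99412857183344409360016:ℝ)/295602507589307098388671875)*x^5*rv + ((-81170257988261842142848:ℝ)/295602507589307098388671875)*x^5*tv*rv + ((16568809529661216276736:ℝ)/295602507589307098388671875)*x^5*tv^2*rv + ((20179074880256:ℝ)/1395905328369140625)*x^6 + ((-8238072822784:ℝ)/1395905328369140625)*x^6*tv) * hr2 + (((183318963966620256589516217541218510605773808608136:ℝ)/496710746919232360992431640625) + ((-20346252249056772698788094067779600192:ℝ)/1498829615945782470703125)*tv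 + ((-824935263503744455733998202115071794788147378320512:ℝ)/13411190166819273746795654296875)*tv^2 + ((-12393578434951119184373201248063585284195136:ℝ)/4470396722273091248931884765625)*x*rv + ((15178971627899957287429332146912079967814912:ℝ)/13411190166819273746795654296875)*x*tv*rv + ((-31766057485418074870824391623261582796187625829088:ℝ)/62963334116522411956787109375)*x^2 + ((251640997899152322901141705609754368:ℝ)/7036758760308837890625)*x^2*tv + ((5294341994082799279633904179984141587118645211648:ℝ)/62963334116522411956787109375)*x^2*tv^2 + ((715865397986896480656812645207185757044096:ℝ)/188890002349567235870361328125)*x^3*rv + ((-97416941657715151092323327810081686709248:ℝ)/62963334116522411956787109375)*x^3*tv*rv + ((458709775032385094187383651478209796408036925792:ℝ)/2660422568303763885498046875)*x^4 + ((-597989966350161511872459811827968:ℝ)/33036426104736328125)*x^4*tv + ((-8494623272393725377216352440204387054067061248:ℝ)/295602507589307098388671875)*x^4*tv^2 + ((-1148586007944551627872180428860294903296:ℝ)/886807522767921295166015625)*x^5*rv + ((156302758094943966236966252484096078848:ℝ)/295602507589307098388671875)*x^5*tv*rv + ((-77714304173938324435249344512:ℝ)/1395905328369140625)*x^6) * 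ht2
private lemma keyB (x : ℝ) : 1 + Z x =
    (1 - x ^ 2) * ((131754544384 + 53788555776 * tv) / 6591796875 - (1024 / 6591796875) * rv * x)
      * (G2f x) ^ 2 := by
  rw [Zeq, G2f]
  linear_combination (((-78274731816398456256656669577716:ℝ)/2660422568303763885498046875)*x^2 + ((31955536819370981817845664013624:ℝ)/2660422568303763885498046875)*x^2*tv + ((1449531038982705867488281397504:ℝ)/295602507589307098388671875)*x^2*tv^2 + ((-197256259724165399930793697152:ℝ)/98534169196435699462890625)*x^2*tv^3 + ((608353318712914263874576:ℝ)/2660422568303763885498046875)*x^3*rv + ((-55190933856676334436992:ℝ)/295602507589307098388671875)*x^3*tv*rv + ((3755267399234983496448:ℝ)/98534169196435699462890625)*x^3*tv^2*rv + ((78274731848111017454675542928116:ℝ)/2660422568303763885498046875)*x^4 + ((-31955536832317580712775427879224:ℝ)/2660422568303763885498046875)*x^4*tv + ((-1449531038982705867488281397504:ℝ)/295602507589307098388671875)*x^4*tv^2 + ((197256259724165399930793697152:ℝ)/98534169196435699462890625)*x^4*tv^3 + ((-608353318712914263874576:ℝ)/2660422568303763885498046875)*x^5*rv + ((55190933856676334436992:ℝ)/295602507589307098388671875)*x^5*tv*rv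 + ((-3755267399234983496448:ℝ)/98534169196435699462890625)*x^5*tv^2*rv + ((-49918084833536:ℝ)/4187715985107421875)*x^6 + ((2264330310656:ℝ)/465301776123046875)*x^6*tv) * hr2 + (((12813655613939941376:ℝ)/33229248046875) + ((-1741686632152563712:ℝ)/11076416015625)*tv + ((-1034335936526010578241664:ℝ)/11893113397705078125)*x*rv + ((390759141882107919269888:ℝ)/11012142034912109375)*x*tv*rv + ((100484724130893967102506644635978745705656301344:ℝ)/886807522767921295166015625)*x^2 + ((-1631091656260978519245595728431872:ℝ)/99109278314208984375)*x^2*tv + ((-1860827562244906862088061676818861431024231936:ℝ)/98534169196435699462890625)*x^2*tv^2 + ((-2342909695060314631639268728602247284352:ℝ)/2660422568303763885498046875)*x^3*rv + ((35425513999789379876469148462284913664:ℝ)/98534169196435699462890625)*x^3*tv*rv + ((-301454172514815365964244428614328851687610004832:ℝ)/2660422568303763885498046875)*x^4 + ((543697223948399541418167165524224:ℝ)/33036426104736328125)*x^4*tv + ((1860827562244906862088061676818861431024231936:ℝ)/98534169196435699462890625)*x^4*tv^2 + ((260323325159493943651652919084430524928:ℝ)/295602507589307098388671875)*x^5*rv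 + ((-35425517496214260630647335807407012864:ℝ)/98534169196435699462890625)*x^5*tv*rv + ((21360682079175952795113361408:ℝ)/465301776123046875)*x^6) * ht2
private lemma hK0 : ((-203573:ℝ)/2000000) ≤ ((((-49128007998551):ℝ)/721691740400) + ((5014106319791:ℝ)/180422935100) * tv) * rv ∧
    ((((-49128007998551):ℝ)/721691740400) + ((5014106319791:ℝ)/180422935100) * tv) * rv ≤ ((-1017267:ℝ)/10000000) := by
  have h1 := tlb; have h2 := tub; have h3 := rlb; have h4 := rub
  constructor <;> nlinarith [mul_nonneg (sub_nonneg.2 h3) (sub_nonneg.2 h1), mul_nonneg (sub_nonneg.2 h4) (sub_nonneg.2 h2), mul_nonneg (sub_nonneg.2 h3) (sub_nonneg.2 h2), mul_nonneg (sub_nonneg.2 h4) (sub_nonneg.2 h1)]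

private lemma hK2 : ((2705039:ℝ)/10000000) ≤ ((((236473533753):ℝ)/5082336200) + (((-24134978973):ℝ)/1270584050) * tv) * rv ∧
    ((((236473533753):ℝ)/5082336200) + (((-24134978973):ℝ)/1270584050) * tv) * rv ≤ ((2705449:ℝ)/10000000) := by
  have h1 := tlb; have h2 := tub; have h3 := rlb; have h4 := rub
  constructor <;> nlinarith [mul_nonneg (sub_nonneg.2 h3) (sub_nonneg.2 h1), mul_nonneg (sub_nonneg.2 h4) (sub_nonneg.2 h2), mul_nonneg (sub_nonneg.2 h3) (sub_nonneg.2 h2), mul_nonneg (sub_nonneg.2 h4) (sub_nonneg.2 h1)]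

private lemma hK1 : ((312219:ℝ)/1250000) ≤ ((((194992518881):ℝ)/5082336200) + (((-19901340621):ℝ)/1270584050) * tv) * rv ∧
    ((((194992518881):ℝ)/5082336200) + (((-19901340621):ℝ)/1270584050) * tv) * rv ≤ ((249809:ℝ)/1000000) := by
  have h1 := tlb; have h2 := tub; have h3 := rlb; have h4 := rub
  constructor <;> nlinarith [mul_nonneg (sub_nonneg.2 h3) (sub_nonneg.2 h1), mul_nonneg (sub_nonneg.2 h4) (sub_nonneg.2 h2), mul_nonneg (sub_nonneg.2 h3) (sub_nonneg.2 h2), mul_nonneg (sub_nonneg.2 h4) (sub_nonneg.2 h1)]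

private lemma sG1a : G1f (((-9)/10:ℝ)) < 0 := by
  rw [G1f]; have h0 := hK0; have h2 := hK2; have h1 := tlb; have h2' := tub
  nlinarith [h0.1, h0.2, h2.1, h2.2]

private lemma sG1b : (0:ℝ) < G1f (((-22)/25:ℝ)) := by
  rw [G1f]; have h0 := hK0; have h2 := hK2; have h1 := tlb; have h2' := tub
  nlinarith [h0.1, h0.2, h2.1, h2.2]

private lemma sG1c : (0:ℝ) < G1f (((-4)/25:ℝ)) := by
  rw [G1f]; have h0 := hK0; have h2 := hK2; have h1 := tlb; have h2' := tub
  nlinarith [h0.1, h0.2, h2.1, h2.2]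

private lemma sG1d : G1f (((-7)/50:ℝ)) < 0 := by
  rw [G1f]; have h0 := hK0; have h2 := hK2; have h1 := tlb; have h2' := tub
  nlinarith [h0.1, h0.2, h2.1, h2.2]

private lemma sG1e : G1f ((19/25:ℝ)) < 0 := by
  rw [G1f]; have h0 := hK0; have h2 := hK2; have h1 := tlb; have h2' := tub
  nlinarith [h0.1, h0.2, h2.1, h2.2]

private lemma sG1f : (0:ℝ) < G1f ((39/50:ℝ)) := by
  rw [G1f]; have h0 := hK0; have h2 := hK2; have h1 := tlb; have h2' := tub
  nlinarith [h0.1, h0.2, h2.1, h2.2]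

private lemma sG2a : (0:ℝ) < G2f (((-59)/100:ℝ)) := by
  rw [G2f]; have h0 := hK1; have h1 := tlb; have h2' := tub
  nlinarith [h0.1, h0.2]

private lemma sG2b : G2f (((-29)/50:ℝ)) < 0 := by
  rw [G2f]; have h0 := hK1; have h1 := tlb; have h2' := tub
  nlinarith [h0.1, h0.2]

private lemma sG2c : G2f ((33/100:ℝ)) < 0 := by
  rw [G2f]; have h0 := hK1; have h1 := tlb; have h2' := tub
  nlinarith [h0.1, h0.2]

private lemma sG2d : (0:ℝ) < G2f ((17/50:ℝ)) := by
  rw [G2f]; have h0 := hK1; have h1 := tlb; have h2' := tub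
  nlinarith [h0.1, h0.2]

private lemma contG1 : Continuous G1f := by unfold G1f; fun_prop
private lemma contG2 : Continuous G2f := by unfold G2f; fun_prop
private lemma contZ : Continuous Z := by unfold Z; fun_prop

private lemma gam1pos {x : ℝ} (hx : x ∈ Set.Icc (-1:ℝ) 1) :
    0 ≤ (136317967616 + 55651572224 * tv) / 6591796875 - (1024 / 6591796875) * rv * x := by
  obtain ⟨h1, h2⟩ := hx
  nlinarith [tlb, rub, hrnn, mul_le_mul_of_nonneg_left h2 hrnn,
    mul_le_mul_of_nonneg_left (neg_le_of_neg_le (by linarith : -(1:ℝ) ≤ x)) hrnn]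

private lemma gam2pos {x : ℝ} (hx : x ∈ Set.Icc (-1:ℝ) 1) :
    0 ≤ (131754544384 + 53788555776 * tv) / 6591796875 - (1024 / 6591796875) * rv * x := by
  obtain ⟨h1, h2⟩ := hx
  nlinarith [tlb, rub, hrnn, mul_le_mul_of_nonneg_left h2 hrnn,
    mul_le_mul_of_nonneg_left (neg_le_of_neg_le (by linarith : -(1:ℝ) ≤ x)) hrnn]

private lemma Zle {x : ℝ} (hx : x ∈ Set.Icc (-1:ℝ) 1) : |Z x| ≤ 1 := by
  have a1 : 0 ≤ 1 - Z x := by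
    rw [keyA]; exact mul_nonneg (gam1pos hx) (sq_nonneg _)
  have a2 : 0 ≤ 1 + Z x := by
    rw [keyB]
    exact mul_nonneg (mul_nonneg (by nlinarith [hx.1, hx.2] : (0:ℝ) ≤ 1 - x ^ 2)
      (gam2pos hx)) (sq_nonneg _)
  rw [abs_le]; constructor <;> linarith

private lemma Z1 : Z 1 = -1 := by have h := keyB 1; norm_num at h; linarith
private lemma Zm1 : Z (-1) = -1 := by have h := keyB (-1); norm_num at h; linarith

private lemma zroot1 {x : ℝ} (h : G1f x = 0) : Z x = 1 := by
  have hk := keyA x; rw [h] at hk; norm_num at hk; linarith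

private lemma zroot2 {x : ℝ} (h : G2f x = 0) : Z x = -1 := by
  have hk := keyB x; rw [h] at hk; norm_num at hk; linarith

private lemma exG1 (a b : ℝ) (hab : a ≤ b) (h1 : G1f a < 0) (h2 : 0 < G1f b) :
    ∃ m ∈ Set.Ioo a b, Z m = 1 := by
  have := intermediate_value_Ioo hab contG1.continuousOn (Set.mem_Ioo.2 ⟨h1, h2⟩)
  obtain ⟨m, hm, hroot⟩ := this
  exact ⟨m, hm, zroot1 hroot⟩

private lemma exG1' (a b : ℝ) (hab : a ≤ b) (h1 : 0 < G1f a) (h2 : G1f b < 0) :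
    ∃ m ∈ Set.Ioo a b, Z m = 1 := by
  have := intermediate_value_Ioo' hab contG1.continuousOn (Set.mem_Ioo.2 ⟨h2, h1⟩)
  obtain ⟨m, hm, hroot⟩ := this
  exact ⟨m, hm, zroot1 hroot⟩

private lemma exG2 (a b : ℝ) (hab : a ≤ b) (h1 : 0 < G2f a) (h2 : G2f b < 0) :
    ∃ m ∈ Set.Ioo a b, Z m = -1 := by
  have := intermediate_value_Ioo' hab contG2.continuousOn (Set.mem_Ioo.2 ⟨h2, h1⟩)
  obtain ⟨m, hm, hroot⟩ := this
  exact ⟨m, hm, zroot2 hroot⟩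

private lemma exG2' (a b : ℝ) (hab : a ≤ b) (h1 : G2f a < 0) (h2 : 0 < G2f b) :
    ∃ m ∈ Set.Ioo a b, Z m = -1 := by
  have := intermediate_value_Ioo hab contG2.continuousOn (Set.mem_Ioo.2 ⟨h1, h2⟩)
  obtain ⟨m, hm, hroot⟩ := this
  exact ⟨m, hm, zroot2 hroot⟩

private lemma b7eq : b7 = (1024 / 6591796875) * rv := by
  rw [b7, show Real.sqrt 6 = tv from rfl]; rfl

private lemma b7pos : 0 < b7 := by
  rw [b7eq]; nlinarith [rlb]

private lemma sw_nn : (0:ℝ) ≤ (-24764015 + 10110318 * Real.sqrt 6) / 142 := by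
  rw [show Real.sqrt 6 = tv from rfl]; nlinarith [tlb]

private lemma snn : 0 ≤ s := by
  rw [s]; positivity

private lemma hs2 : s ^ 2 = (-24764015 + 10110318 * tv) / 142 / 784 := by
  rw [s, mul_pow, Real.sq_sqrt sw_nn, show Real.sqrt 6 = tv from rfl]; ring

private lemma part2 : b6 / b7 = -7 * s := by
  have key : b6 ^ 2 = 49 * s ^ 2 * b7 ^ 2 := by
    rw [b6, b7eq, show Real.sqrt 6 = tv from rfl, hs2]
    linear_combination (((162293448704:ℝ)/617015361785888671875) + ((-110431633408:ℝ)/1028358936309814453125)*tv) * hr2 + (((-3125218566000893945772507136:ℝ)/3085076808929443359375)) * ht2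
  have hb6neg : b6 < 0 := by rw [b6, show Real.sqrt 6 = tv from rfl]; nlinarith [htnn]
  have hfac : (b6 - 7 * s * b7) * (b6 + 7 * s * b7) = 0 := by linear_combination key
  have h7 : 0 ≤ 7 * s * b7 := mul_nonneg (mul_nonneg (by norm_num) snn) (le_of_lt b7pos)
  rcases mul_eq_zero.1 hfac with h | h
  · nlinarith
  · have hb7 : b7 ≠ 0 := ne_of_gt b7pos
    field_simp
    linear_combination h

set_option maxHeartbeats 1000000 in
/-- Zolotarev's first problem for n = 7 at parameter t = −21: every monic
septic with second leading coefficient −7s has uniform norm at least 1/b₇ on [−1,1];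
moreover Z/b₇ is such a polynomial and attains this bound. -/
theorem stmt15 :
    (∀ c0 c1 c2 c3 c4 c5 : ℝ,
      1 / b7 ≤ sSup ((fun x : ℝ =>
        |x ^ 7 - 7 * s * x ^ 6 + c5 * x ^ 5 + c4 * x ^ 4 + c3 * x ^ 3 + c2 * x ^ 2 +
          c1 * x + c0|) '' Set.Icc (-1 : ℝ) 1)) ∧
    b6 / b7 = -7 * s ∧
    sSup ((fun x : ℝ => |Z x / b7|) '' Set.Icc (-1 : ℝ) 1) = 1 / b7 := by
  obtain ⟨m1, hm1, hzm1⟩ := exG1 ((-9:ℝ)/10) ((-22:ℝ)/25) (by norm_num) sG1a sG1b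
  obtain ⟨n1, hn1, hzn1⟩ := exG2 ((-59:ℝ)/100) ((-29:ℝ)/50) (by norm_num) sG2a sG2b
  obtain ⟨m2, hm2, hzm2⟩ := exG1' ((-4:ℝ)/25) ((-7:ℝ)/50) (by norm_num) sG1c sG1d
  obtain ⟨n2, hn2, hzn2⟩ := exG2' ((33:ℝ)/100) ((17:ℝ)/50) (by norm_num) sG2c sG2d
  obtain ⟨m3, hm3, hzm3⟩ := exG1 ((19:ℝ)/25) ((39:ℝ)/50) (by norm_num) sG1e sG1f
  obtain ⟨hm1a, hm1b⟩ := hm1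
  obtain ⟨hn1a, hn1b⟩ := hn1
  obtain ⟨hm2a, hm2b⟩ := hm2
  obtain ⟨hn2a, hn2b⟩ := hn2
  obtain ⟨hm3a, hm3b⟩ := hm3
  have hm1I : m1 ∈ Set.Icc (-1:ℝ) 1 := ⟨by norm_num at hm1a ⊢; linarith, by norm_num at hm1b ⊢; linarith⟩
  have hn1I : n1 ∈ Set.Icc (-1:ℝ) 1 := ⟨by norm_num at hn1a ⊢; linarith, by norm_num at hn1b ⊢; linarith⟩
  have hm2I : m2 ∈ Set.Icc (-1:ℝ) 1 := ⟨by norm_num at hm2a ⊢; linarith, by norm_num at hm2b ⊢; linarith⟩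
  have hn2I : n2 ∈ Set.Icc (-1:ℝ) 1 := ⟨by norm_num at hn2a ⊢; linarith, by norm_num at hn2b ⊢; linarith⟩
  have hm3I : m3 ∈ Set.Icc (-1:ℝ) 1 := ⟨by norm_num at hm3a ⊢; linarith, by norm_num at hm3b ⊢; linarith⟩
  have hb7 : b7 ≠ 0 := ne_of_gt b7pos
  refine ⟨?_, part2, ?_⟩
  · intro c0 c1 c2 c3 c4 c5
    by_contra hlt
    push_neg at hlt
    set g : ℝ → ℝ := fun x => x ^ 7 - 7 * s * x ^ 6 + c5 * x ^ 5 + c4 * x ^ 4 + c3 * x ^ 3 +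
      c2 * x ^ 2 + c1 * x + c0 with hgdef
    have hgc : Continuous g := by unfold g; fun_prop
    have hbdd : BddAbove ((fun x : ℝ => |g x|) '' Set.Icc (-1:ℝ) 1) :=
      (isCompact_Icc.image (hgc.abs)).bddAbove
    have hub : ∀ x ∈ Set.Icc (-1:ℝ) 1, |g x| < 1 / b7 := fun x hx =>
      lt_of_le_of_lt (le_csSup hbdd ⟨x, hx, rfl⟩) hlt
    set Q : ℝ → ℝ := fun x => Z x / b7 - g x with hQdef
    have hQc : Continuous Q := by unfold Q; exact (contZ.div_const _).sub hgc
    have hQpos : ∀ e ∈ Set.Icc (-1:ℝ) 1, Z e = 1 → 0 < Q e := by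
      intro e he hz
      have h := abs_lt.1 (hub e he)
      show 0 < Z e / b7 - g e
      rw [hz]
      linarith [h.2]
    have hQneg : ∀ e ∈ Set.Icc (-1:ℝ) 1, Z e = -1 → Q e < 0 := by
      intro e he hz
      have h := abs_lt.1 (hub e he)
      show Z e / b7 - g e < 0
      rw [hz]
      have : (-1:ℝ)/b7 = -(1/b7) := by ring
      rw [this]
      linarith [h.1]
    have hQm1 : Q (-1) < 0 := hQneg (-1) (by norm_num) Zm1
    have hQ1 : Q 1 < 0 := hQneg 1 (by norm_num) Z1
    have hQem1 : 0 < Q m1 := hQpos m1 hm1I hzm1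
    have hQen1 : Q n1 < 0 := hQneg n1 hn1I hzn1
    have hQem2 : 0 < Q m2 := hQpos m2 hm2I hzm2
    have hQen2 : Q n2 < 0 := hQneg n2 hn2I hzn2
    have hQem3 : 0 < Q m3 := hQpos m3 hm3I hzm3
    have ho1 : (-1:ℝ) ≤ m1 := hm1I.1
    have ho2 : m1 ≤ n1 := by norm_num at hm1b hn1a ⊢; linarith
    have ho3 : n1 ≤ m2 := by norm_num at hn1b hm2a ⊢; linarith
    have ho4 : m2 ≤ n2 := by norm_num at hm2b hn2a ⊢; linarith
    have ho5 : n2 ≤ m3 := by norm_num at hn2b hm3a ⊢; linarith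
    have ho6 : m3 ≤ 1 := hm3I.2
    obtain ⟨z1, hz1m, hz1⟩ := intermediate_value_Ioo ho1 hQc.continuousOn
      (Set.mem_Ioo.2 ⟨hQm1, hQem1⟩)
    obtain ⟨z2, hz2m, hz2⟩ := intermediate_value_Ioo' ho2 hQc.continuousOn
      (Set.mem_Ioo.2 ⟨hQen1, hQem1⟩)
    obtain ⟨z3, hz3m, hz3⟩ := intermediate_value_Ioo ho3 hQc.continuousOn
      (Set.mem_Ioo.2 ⟨hQen1, hQem2⟩)
    obtain ⟨z4, hz4m, hz4⟩ := intermediate_value_Ioo' ho4 hQc.continuousOn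
      (Set.mem_Ioo.2 ⟨hQen2, hQem2⟩)
    obtain ⟨z5, hz5m, hz5⟩ := intermediate_value_Ioo ho5 hQc.continuousOn
      (Set.mem_Ioo.2 ⟨hQen2, hQem3⟩)
    obtain ⟨z6, hz6m, hz6⟩ := intermediate_value_Ioo' ho6 hQc.continuousOn
      (Set.mem_Ioo.2 ⟨hQ1, hQem3⟩)
    -- ordering of roots
    have hord1 : z1 < z2 := lt_trans hz1m.2 hz2m.1
    have hord2 : z2 < z3 := lt_trans hz2m.2 hz3m.1
    have hord3 : z3 < z4 := lt_trans hz3m.2 hz4m.1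
    have hord4 : z4 < z5 := lt_trans hz4m.2 hz5m.1
    have hord5 : z5 < z6 := lt_trans hz5m.2 hz6m.1
    -- the difference polynomial
    set p : Polynomial ℝ :=
      Polynomial.C (b0 / b7 - c0) + Polynomial.C (b1 / b7 - c1) * Polynomial.X +
      Polynomial.C (b2 / b7 - c2) * Polynomial.X ^ 2 +
      Polynomial.C (b3 / b7 - c3) * Polynomial.X ^ 3 +
      Polynomial.C (b4 / b7 - c4) * Polynomial.X ^ 4 +
      Polynomial.C (b5 / b7 - c5) * Polynomial.X ^ 5 with hpdef
    have hpev : ∀ x : ℝ, p.eval x = Q x := by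
      intro x
      have hzx : Z x / b7 = b0 / b7 + (b1 / b7) * x + (b2 / b7) * x ^ 2 + (b3 / b7) * x ^ 3 +
          (b4 / b7) * x ^ 4 + (b5 / b7) * x ^ 5 + (b6 / b7) * x ^ 6 + x ^ 7 := by
        rw [Z]
        field_simp
      show p.eval x = Z x / b7 - g x
      simp only [hpdef, Polynomial.eval_add, Polynomial.eval_mul, Polynomial.eval_pow,
        Polynomial.eval_C, Polynomial.eval_X]
      rw [hzx, part2]
      show _ = _ - (x ^ 7 - 7 * s * x ^ 6 + c5 * x ^ 5 + c4 * x ^ 4 + c3 * x ^ 3 +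
        c2 * x ^ 2 + c1 * x + c0)
      ring
    have hz1e : p.eval z1 = 0 := by rw [hpev]; exact hz1
    have hz2e : p.eval z2 = 0 := by rw [hpev]; exact hz2
    have hz3e : p.eval z3 = 0 := by rw [hpev]; exact hz3
    have hz4e : p.eval z4 = 0 := by rw [hpev]; exact hz4
    have hz5e : p.eval z5 = 0 := by rw [hpev]; exact hz5
    have hz6e : p.eval z6 = 0 := by rw [hpev]; exact hz6
    have h12 : z1 ≠ z2 := ne_of_lt hord1
    have h13 : z1 ≠ z3 := ne_of_lt (lt_trans hord1 hord2)
    have h14 : z1 ≠ z4 := ne_of_lt (lt_trans (lt_trans hord1 hord2) hord3)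
    have h15 : z1 ≠ z5 := ne_of_lt (lt_trans (lt_trans (lt_trans hord1 hord2) hord3) hord4)
    have h16 : z1 ≠ z6 := ne_of_lt (lt_trans (lt_trans (lt_trans (lt_trans hord1 hord2) hord3) hord4) hord5)
    have h23 : z2 ≠ z3 := ne_of_lt hord2
    have h24 : z2 ≠ z4 := ne_of_lt (lt_trans hord2 hord3)
    have h25 : z2 ≠ z5 := ne_of_lt (lt_trans (lt_trans hord2 hord3) hord4)
    have h26 : z2 ≠ z6 := ne_of_lt (lt_trans (lt_trans (lt_trans hord2 hord3) hord4) hord5)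
    have h34 : z3 ≠ z4 := ne_of_lt hord3
    have h35 : z3 ≠ z5 := ne_of_lt (lt_trans hord3 hord4)
    have h36 : z3 ≠ z6 := ne_of_lt (lt_trans (lt_trans hord3 hord4) hord5)
    have h45 : z4 ≠ z5 := ne_of_lt hord4
    have h46 : z4 ≠ z6 := ne_of_lt (lt_trans hord4 hord5)
    have h56 : z5 ≠ z6 := ne_of_lt hord5
    have hcard : ({z1, z2, z3, z4, z5, z6} : Finset ℝ).card = 6 := by
      rw [Finset.card_insert_of_notMem (by simp [h12, h13, h14, h15, h16]),
        Finset.card_insert_of_notMem (by simp [h23, h24, h25, h26]),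
        Finset.card_insert_of_notMem (by simp [h34, h35, h36]),
        Finset.card_insert_of_notMem (by simp [h45, h46]),
        Finset.card_insert_of_notMem (by simp [h56]),
        Finset.card_singleton]
    have hdeg : p.natDegree ≤ 5 := by rw [hpdef]; compute_degree
    have hp0 : p = 0 := by
      apply Polynomial.eq_zero_of_natDegree_lt_card_of_eval_eq_zero' p {z1, z2, z3, z4, z5, z6}
      · intro i hi
        simp only [Finset.mem_insert, Finset.mem_singleton] at hi
        rcases hi with rfl | rfl | rfl | rfl | rfl | rfl <;> assumption
      · rw [hcard]; omega
    have : Q (-1) = 0 := by rw [← hpev, hp0]; simp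
    linarith
  · have hne : ((fun x : ℝ => |Z x / b7|) '' Set.Icc (-1:ℝ) 1).Nonempty :=
      ⟨|Z 1 / b7|, 1, by norm_num, rfl⟩
    have hb7p := b7pos
    apply le_antisymm
    · apply csSup_le hne
      rintro y ⟨x, hx, rfl⟩
      show |Z x / b7| ≤ 1 / b7
      rw [abs_div, abs_of_pos hb7p]
      have := Zle hx
      gcongr
    · apply le_csSup
      · exact (isCompact_Icc.image ((contZ.div_const _).abs)).bddAbove
      · exact ⟨1, by norm_num, by show |Z 1 / b7| = 1 / b7; rw [Z1, abs_div, abs_of_pos hb7p]; norm_num⟩
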